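/- If φ_n ∈ 𝓒 w-converges to φ ∈ L²(E, ν), then liminf_{n→∞} ⟨φ_n, φ_n⟩_n ≥ ⟨φ, φ⟩. -/

import Mathlib

open MeasureTheory Filter Topology

noncomputable section

namespace Mosco

variable {E : Type*} [MeasurableSpace E]

/-- The inner product of two real-valued functions with respect to a measure,
`⟨φ, ψ⟩ = ∫ φ ψ dμ`. -/
def ip (μ : Measure E) (φ ψ : E → ℝ) : ℝ := ∫ x, φ x * ψ x ∂μ

/-- The framework of Section 2.1: mutually singular probability measures `ν n`, `n : ℕ`
(`ν 0` playing the role of the limit measure `ν`), such that `L²(E, ν 0)` is separable,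
together with disjoint sets `En n` carrying `ν n`, and a linear subset `F = 𝓕 ⊆ 𝓓`
which is dense in `L²(E, ν 0)`. -/
structure Frame (E : Type*) [MeasurableSpace E] where
  ν : ℕ → Measure E
  prob : ∀ n, IsProbabilityMeasure (ν n)
  singular : ∀ m n, m ≠ n → (ν m).MutuallySingular (ν n)
  separableL2 : TopologicalSpace.SeparableSpace (Lp ℝ 2 (ν 0))
  En : ℕ → Set E
  measEn : ∀ n, MeasurableSet (En n)
  disjEn : ∀ m n, m ≠ n → Disjoint (En m) (En n)
  nullEn : ∀ n, ν n (En n)ᶜ = 0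
  F : Set (E → ℝ)
  F_measurable : ∀ φ ∈ F, Measurable φ
  F_memL2 : ∀ φ ∈ F, ∀ n, MemLp φ 2 (ν n)
  F_tendsto : ∀ φ ∈ F, Tendsto (fun n => ip (ν n) φ φ) atTop (𝓝 (ip (ν 0) φ φ))
  F_linear : ∀ φ ∈ F, ∀ ψ ∈ F, ∀ a b : ℝ, (fun x => a * φ x + b * ψ x) ∈ F
  F_dense : ∀ f : E → ℝ, Measurable f → MemLp f 2 (ν 0) → ∀ ε : ℝ, 0 < ε →
    ∃ φ ∈ F, ip (ν 0) (fun x => f x - φ x) (fun x => f x - φ x) < ε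

/-- The set `𝓓`: everywhere defined measurable functions lying in every `L²(E, ν n)`
whose `ν n`-norms converge to the `ν 0`-norm. -/
def Frame.D (fr : Frame E) : Set (E → ℝ) :=
  {φ | Measurable φ ∧ (∀ n, MemLp φ 2 (fr.ν n)) ∧
    Tendsto (fun n => ip (fr.ν n) φ φ) atTop (𝓝 (ip (fr.ν 0) φ φ))}

/-- The set `𝓒`: elements of `𝓓` satisfying conditions (c1) and (c2). -/
def Frame.C (fr : Frame E) : Set (E → ℝ) :=
  {φ | φ ∈ fr.D ∧ (∀ n, 1 ≤ n → ∃ g ∈ fr.F, φ =ᵐ[fr.ν n] g) ∧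
    ∀ ψ ∈ fr.F, Tendsto (fun n => ip (fr.ν n) φ ψ) atTop (𝓝 (ip (fr.ν 0) φ ψ))}

/-- The set `𝓥` of multipliers mapping `𝓓` into `𝓓` and `𝓕` into `𝓕`. -/
def Frame.V (fr : Frame E) : Set (E → ℝ) :=
  {ψ | Measurable ψ ∧ (∀ n, MemLp ψ 2 (fr.ν n)) ∧
    (∀ σ ∈ fr.D, (fun x => σ x * ψ x) ∈ fr.D) ∧
    (∀ τ ∈ fr.F, (fun x => τ x * ψ x) ∈ fr.F)}

/-- `w`-convergence of a sequence `φs` (with `φs n` regarded as an element of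
`L²(E, ν n)`) to `φ ∈ L²(E, ν 0)`. -/
def Frame.WConv (fr : Frame E) (φs : ℕ → E → ℝ) (φ : E → ℝ) : Prop :=
  ∀ ψ ∈ fr.C, Tendsto (fun n => ip (fr.ν n) (φs n) ψ) atTop (𝓝 (ip (fr.ν 0) φ ψ))

/-- `s`-convergence: `w`-convergence together with convergence of the norms. -/
def Frame.SConv (fr : Frame E) (φs : ℕ → E → ℝ) (φ : E → ℝ) : Prop :=
  fr.WConv φs φ ∧
  Tendsto (fun n => ip (fr.ν n) (φs n) (φs n)) atTop (𝓝 (ip (fr.ν 0) φ φ))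

section Helpers

variable {μ : Measure E} {f g : E → ℝ}

lemma ip_nonneg (μ : Measure E) (f : E → ℝ) : 0 ≤ ip μ f f :=
  integral_nonneg fun _ => mul_self_nonneg _

lemma ip_congr {f' g' : E → ℝ} (hf : f =ᵐ[μ] f') (hg : g =ᵐ[μ] g') :
    ip μ f g = ip μ f' g' := by
  refine integral_congr_ae ?_
  filter_upwards [hf, hg] with x hx hx'
  rw [hx, hx']

lemma integrable_mul_of_memL2 (hfm : Measurable f) (hgm : Measurable g)
    (hf : MemLp f 2 μ) (hg : MemLp g 2 μ) : Integrable (fun x => f x * g x) μ := by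
  have hb : Integrable (fun x => (f x ^ 2 + g x ^ 2) / 2) μ :=
    (hf.integrable_sq.add hg.integrable_sq).div_const 2
  refine hb.mono' (hfm.mul hgm).aestronglyMeasurable (Eventually.of_forall fun x => ?_)
  rw [Real.norm_eq_abs]
  rcases abs_cases (f x * g x) with ⟨h, _⟩ | ⟨h, _⟩ <;> rw [h] <;>
    nlinarith [sq_nonneg (f x - g x), sq_nonneg (f x + g x)]

lemma ip_expand (hfm : Measurable f) (hgm : Measurable g)
    (hf : MemLp f 2 μ) (hg : MemLp g 2 μ) (a b : ℝ) :
    ip μ (fun x => a * f x + b * g x) (fun x => a * f x + b * g x)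
      = a ^ 2 * ip μ f f + 2 * a * b * ip μ f g + b ^ 2 * ip μ g g := by
  have hff := integrable_mul_of_memL2 hfm hfm hf hf
  have hfg := integrable_mul_of_memL2 hfm hgm hf hg
  have hgg := integrable_mul_of_memL2 hgm hgm hg hg
  have key : ∀ x, (a * f x + b * g x) * (a * f x + b * g x)
      = a ^ 2 * (f x * f x) + (2 * a * b) * (f x * g x) + b ^ 2 * (g x * g x) := by
    intro x; ring
  unfold ip
  simp_rw [key]
  have hAB : Integrable (fun x => a ^ 2 * (f x * f x) + 2 * a * b * (f x * g x)) μ :=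
    (hff.const_mul _).add (hfg.const_mul _)
  have h1 : ∫ x, (a ^ 2 * (f x * f x) + 2 * a * b * (f x * g x)) + b ^ 2 * (g x * g x) ∂μ
      = (∫ x, a ^ 2 * (f x * f x) + 2 * a * b * (f x * g x) ∂μ) + ∫ x, b ^ 2 * (g x * g x) ∂μ :=
    integral_add hAB (hgg.const_mul _)
  have h2 : ∫ x, a ^ 2 * (f x * f x) + 2 * a * b * (f x * g x) ∂μ
      = (∫ x, a ^ 2 * (f x * f x) ∂μ) + ∫ x, 2 * a * b * (f x * g x) ∂μ :=
    integral_add (hff.const_mul _) (hfg.const_mul _)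
  rw [h1, h2, integral_const_mul, integral_const_mul, integral_const_mul]

lemma ip_sub_expand (hfm : Measurable f) (hgm : Measurable g)
    (hf : MemLp f 2 μ) (hg : MemLp g 2 μ) :
    ip μ (fun x => f x - g x) (fun x => f x - g x)
      = ip μ f f - 2 * ip μ f g + ip μ g g := by
  have h := ip_expand hfm hgm hf hg 1 (-1)
  have he : (fun x => f x - g x) = fun x => 1 * f x + (-1) * g x := by
    funext x; ring
  rw [he, h]; ring

lemma ip_sq_le (hfm : Measurable f) (hgm : Measurable g)
    (hf : MemLp f 2 μ) (hg : MemLp g 2 μ) :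
    ip μ f g ^ 2 ≤ ip μ f f * ip μ g g := by
  have key : ∀ t : ℝ, 0 ≤ ip μ g g * (t * t) + 2 * ip μ f g * t + ip μ f f := by
    intro t
    have h := ip_expand hfm hgm hf hg 1 t
    have h0 := ip_nonneg μ (fun x => 1 * f x + t * g x)
    rw [h] at h0
    nlinarith [h0]
  have hd := discrim_le_zero key
  rw [discrim] at hd
  nlinarith [hd]

lemma abs_ip_le (hfm : Measurable f) (hgm : Measurable g)
    (hf : MemLp f 2 μ) (hg : MemLp g 2 μ) :
    |ip μ f g| ≤ Real.sqrt (ip μ f f) * Real.sqrt (ip μ g g) := by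
  rw [← Real.sqrt_sq_eq_abs, ← Real.sqrt_mul (ip_nonneg μ f)]
  exact Real.sqrt_le_sqrt (ip_sq_le hfm hgm hf hg)

end Helpers

lemma Frame.zero_mem_F (fr : Frame E) : ∃ g ∈ fr.F, ∀ x, g x = 0 := by
  obtain ⟨h, hh, -⟩ := fr.F_dense (fun _ => 0) measurable_const MemLp.zero' 1 one_pos
  exact ⟨fun x => 1 * h x + (-1) * h x, fr.F_linear h hh h hh 1 (-1), fun x => by ring⟩

lemma Frame.F_subset_C (fr : Frame E) {ψ : E → ℝ} (hψ : ψ ∈ fr.F) : ψ ∈ fr.C := by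
  have hm := fr.F_measurable ψ hψ
  refine ⟨⟨hm, fr.F_memL2 ψ hψ, fr.F_tendsto ψ hψ⟩, fun n _ => ⟨ψ, hψ, EventuallyEq.rfl⟩, ?_⟩
  intro τ hτ
  have hτm := fr.F_measurable τ hτ
  have hsF := fr.F_linear ψ hψ τ hτ 1 1
  have hdF := fr.F_linear ψ hψ τ hτ 1 (-1)
  have key : ∀ n, ip (fr.ν n) ψ τ =
      (ip (fr.ν n) (fun x => 1 * ψ x + 1 * τ x) (fun x => 1 * ψ x + 1 * τ x)
        - ip (fr.ν n) (fun x => 1 * ψ x + (-1) * τ x) (fun x => 1 * ψ x + (-1) * τ x)) / 4 := by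
    intro n
    rw [ip_expand hm hτm (fr.F_memL2 ψ hψ n) (fr.F_memL2 τ hτ n) 1 1,
      ip_expand hm hτm (fr.F_memL2 ψ hψ n) (fr.F_memL2 τ hτ n) 1 (-1)]
    ring
  have h := ((fr.F_tendsto _ hsF).sub (fr.F_tendsto _ hdF)).div_const 4
  have hfun : (fun n => ip (fr.ν n) ψ τ) = fun n =>
      (ip (fr.ν n) (fun x => 1 * ψ x + 1 * τ x) (fun x => 1 * ψ x + 1 * τ x)
        - ip (fr.ν n) (fun x => 1 * ψ x + (-1) * τ x) (fun x => 1 * ψ x + (-1) * τ x)) / 4 :=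
    funext key
  rw [hfun, key 0]
  exact h

/-- Proposition 2.3 (e): if `φs n ∈ 𝓒` `w`-converges to `φ ∈ L²(E, ν)`, then
`liminf_n ⟨φs n, φs n⟩ₙ ≥ ⟨φ, φ⟩`. -/
theorem le_liminf_norm (fr : Frame E) (φs : ℕ → E → ℝ) (hφs : ∀ n, φs n ∈ fr.C)
    (φ : E → ℝ) (hφm : Measurable φ) (hφ2 : MemLp φ 2 (fr.ν 0)) (hw : fr.WConv φs φ) :
    ip (fr.ν 0) φ φ ≤ liminf (fun n => ip (fr.ν n) (φs n) (φs n)) atTop := by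
  classical
  set u : ℕ → ℝ := fun n => ip (fr.ν n) (φs n) (φs n) with hu
  have hmeasφ : ∀ m, Measurable (φs m) := fun m => (hφs m).1.1
  have hmemφ : ∀ m, MemLp (φs m) 2 (fr.ν m) := fun m => (hφs m).1.2.1 m
  -- Step A: the sequence of norms is cobounded (otherwise a gliding-hump test
  -- function in 𝓒 contradicts w-convergence)
  have hcb : IsCoboundedUnder (· ≥ ·) atTop u := by
    by_contra hnc
    rw [Filter.IsCoboundedUnder, Filter.IsCobounded] at hnc
    push_neg at hnc
    have htop : ∀ M : ℝ, ∀ᶠ m in atTop, M ≤ u m := by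
      intro M
      obtain ⟨a, ha, hMa⟩ := hnc M
      rw [eventually_map] at ha
      exact ha.mono fun m hm => le_trans (le_of_lt hMa) hm
    obtain ⟨n, hmono, hn⟩ := Filter.extraction_forall_of_eventually
      (P := fun i k => 1 ≤ k ∧ ((i : ℝ) + 1) ^ 4 ≤ u k)
      (fun i => (eventually_ge_atTop 1).and (htop (((i : ℝ) + 1) ^ 4)))
    have hn1 : ∀ k, 1 ≤ n k := fun k => (hn k).1
    have hupos : ∀ k, 0 < u (n k) := fun k => lt_of_lt_of_le (by positivity) (hn k).2
    set c : ℕ → ℝ := fun k => ((k : ℝ) + 1)⁻¹ * (Real.sqrt (u (n k)))⁻¹ with hc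
    set f : ℕ → E → ℝ := fun k => (fr.En (n k)).indicator (fun y => c k * φs (n k) y) with hf
    have hfmeas : ∀ k, Measurable (f k) :=
      fun k => (measurable_const.mul (hmeasφ (n k))).indicator (fr.measEn (n k))
    have hzero : ∀ x k, x ∈ fr.En (n k) → ∀ j, j ≠ k → f j x = 0 := by
      intro x k hx j hj
      refine Set.indicator_of_notMem (fun hx' => ?_) _
      exact Set.disjoint_left.1 (fr.disjEn (n j) (n k) (fun h => hj (hmono.injective h))) hx' hx
    set ψ : E → ℝ := fun x => ∑' k, f k x with hψ
    have hψmem : ∀ k x, x ∈ fr.En (n k) → ψ x = c k * φs (n k) x := by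
      intro k x hx
      have h1 : ∑' j, f j x = f k x := tsum_eq_single k (fun j hj => hzero x k hx j hj)
      simp only [hψ, h1]
      simp only [hf, Set.indicator_of_mem hx]
    have hψnot : ∀ x, (∀ k, x ∉ fr.En (n k)) → ψ x = 0 := by
      intro x hx
      have h1 : ∀ j, f j x = 0 := fun j => Set.indicator_of_notMem (hx j) _
      simp only [hψ]
      rw [tsum_congr h1, tsum_zero]
    have hsum : ∀ x, HasSum (fun k => f k x) (ψ x) := by
      intro x
      by_cases hx : ∃ k, x ∈ fr.En (n k)
      · obtain ⟨k, hk⟩ := hx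
        have h1 : ψ x = f k x := by
          rw [hψmem k x hk]
          simp only [hf, Set.indicator_of_mem hk]
        rw [h1]
        exact hasSum_single k (fun j hj => hzero x k hk j hj)
      · push_neg at hx
        rw [hψnot x hx]
        have h1 : (fun k => f k x) = fun _ => 0 :=
          funext fun j => Set.indicator_of_notMem (hx j) _
        rw [h1]; exact hasSum_zero
    have hψmeas : Measurable ψ :=
      measurable_of_tendsto_metrizable
        (f := fun K => fun x => ∑ k ∈ Finset.range K, f k x)
        (fun K => Finset.measurable_sum _ fun k _ => hfmeas k)
        (tendsto_pi_nhds.2 fun x => (hsum x).tendsto_sum_nat)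
    have haek : ∀ k, ψ =ᵐ[fr.ν (n k)] fun x => c k * φs (n k) x := by
      intro k
      have hsub : {x | ¬ ψ x = c k * φs (n k) x} ⊆ (fr.En (n k))ᶜ :=
        fun x hx hmem => hx (hψmem k x hmem)
      exact ae_iff.2 (measure_mono_null hsub (fr.nullEn (n k)))
    have hUnull : ∀ m, m ∉ Set.range n → fr.ν m (⋃ k, fr.En (n k)) = 0 := by
      intro m hm
      refine measure_iUnion_null fun k => measure_mono_null ?_ (fr.nullEn m)
      intro x hx
      exact fun hxm => Set.disjoint_left.1 (fr.disjEn (n k) m (fun h => hm ⟨k, h⟩)) hx hxm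
    have hae0 : ∀ m, m ∉ Set.range n → ψ =ᵐ[fr.ν m] 0 := by
      intro m hm
      refine ae_iff.2 (measure_mono_null (fun x hx => ?_) (hUnull m hm))
      by_contra hxU
      refine hx ?_
      have hxn : ∀ k, x ∉ fr.En (n k) := fun k hk => hxU (Set.mem_iUnion.2 ⟨k, hk⟩)
      simpa using hψnot x hxn
    have hmemψ : ∀ m, MemLp ψ 2 (fr.ν m) := by
      intro m
      by_cases hm : m ∈ Set.range n
      · obtain ⟨k, rfl⟩ := hm
        exact ((hmemφ (n k)).const_mul (c k)).ae_eq (haek k).symm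
      · exact MemLp.zero.ae_eq (hae0 m hm).symm
    have hck : ∀ k, c k ^ 2 * u (n k) = (((k : ℝ) + 1) ^ 2)⁻¹ := by
      intro k
      have h1 : Real.sqrt (u (n k)) ^ 2 = u (n k) := Real.sq_sqrt (hupos k).le
      have h2 : c k ^ 2 * u (n k)
          = (((k : ℝ) + 1) ^ 2)⁻¹ * ((Real.sqrt (u (n k)) ^ 2)⁻¹ * u (n k)) := by
        simp only [hc]
        rw [mul_pow, inv_pow, inv_pow, mul_assoc]
      rw [h2, h1, inv_mul_cancel₀ (hupos k).ne', mul_one]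
    have hipψψ_k : ∀ k, ip (fr.ν (n k)) ψ ψ = (((k : ℝ) + 1) ^ 2)⁻¹ := by
      intro k
      rw [ip_congr (haek k) (haek k)]
      have h1 : ip (fr.ν (n k)) (fun x => c k * φs (n k) x) (fun x => c k * φs (n k) x)
          = c k ^ 2 * ip (fr.ν (n k)) (φs (n k)) (φs (n k)) := by
        unfold ip
        simp_rw [show ∀ x, (c k * φs (n k) x) * (c k * φs (n k) x)
            = c k ^ 2 * (φs (n k) x * φs (n k) x) from fun x => by ring]
        rw [integral_const_mul]
      rw [h1]
      exact hck k
    have hipψψ_not : ∀ m, m ∉ Set.range n → ip (fr.ν m) ψ ψ = 0 := by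
      intro m hm
      rw [ip_congr (hae0 m hm) (hae0 m hm)]
      simp [ip]
    have h0notin : (0 : ℕ) ∉ Set.range n := by
      rintro ⟨k, hk⟩
      have := hn1 k
      omega
    have hψψ0 : ip (fr.ν 0) ψ ψ = 0 := hipψψ_not 0 h0notin
    have htend : Tendsto (fun m => ip (fr.ν m) ψ ψ) atTop (𝓝 (ip (fr.ν 0) ψ ψ)) := by
      rw [hψψ0, Metric.tendsto_atTop]
      intro ε hε
      obtain ⟨K, hK⟩ := exists_nat_one_div_lt hε
      refine ⟨n K, fun m hm => ?_⟩
      rw [Real.dist_eq, sub_zero]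
      by_cases hmr : m ∈ Set.range n
      · obtain ⟨k, rfl⟩ := hmr
        have hkK : K ≤ k := hmono.le_iff_le.1 hm
        rw [hipψψ_k k, abs_of_nonneg (by positivity)]
        have hk0 : (0 : ℝ) < (k : ℝ) + 1 := by positivity
        have hstep1 : ((((k : ℝ) + 1)) ^ 2)⁻¹ ≤ ((k : ℝ) + 1)⁻¹ := by
          apply inv_anti₀ hk0
          nlinarith [Nat.cast_nonneg (α := ℝ) k]
        have hstep2 : ((k : ℝ) + 1)⁻¹ ≤ ((K : ℝ) + 1)⁻¹ := by
          apply inv_anti₀ (by positivity)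
          have : (K : ℝ) ≤ (k : ℝ) := Nat.cast_le.2 hkK
          linarith
        have hstep3 : ((K : ℝ) + 1)⁻¹ < ε := by
          rw [one_div] at hK
          exact hK
        linarith
      · rw [hipψψ_not m hmr]
        simpa using hε
    have hψD : ψ ∈ fr.D := ⟨hψmeas, hmemψ, htend⟩
    obtain ⟨gz, hgzF, hgz0⟩ := fr.zero_mem_F
    have hc1 : ∀ m, 1 ≤ m → ∃ g ∈ fr.F, ψ =ᵐ[fr.ν m] g := by
      intro m _
      by_cases hmr : m ∈ Set.range n
      · obtain ⟨k, rfl⟩ := hmr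
        obtain ⟨g, hgF, hg⟩ := (hφs (n k)).2.1 (n k) (hn1 k)
        refine ⟨fun x => c k * g x + 0 * g x, fr.F_linear g hgF g hgF (c k) 0, ?_⟩
        filter_upwards [haek k, hg] with x h1 h2
        rw [h1, h2]; ring
      · exact ⟨gz, hgzF, (hae0 m hmr).trans (Eventually.of_forall fun x => (hgz0 x).symm)⟩
    have hc2 : ∀ τ ∈ fr.F, Tendsto (fun m => ip (fr.ν m) ψ τ) atTop (𝓝 (ip (fr.ν 0) ψ τ)) := by
      intro τ hτ
      have hτm := fr.F_measurable τ hτ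
      have hψτ0 : ip (fr.ν 0) ψ τ = 0 := by
        rw [ip_congr (hae0 0 h0notin) (EventuallyEq.rfl)]
        simp [ip]
      rw [hψτ0]
      have hb : ∀ m, ‖ip (fr.ν m) ψ τ‖
          ≤ Real.sqrt (ip (fr.ν m) ψ ψ) * Real.sqrt (ip (fr.ν m) τ τ) := fun m => by
        rw [Real.norm_eq_abs]
        exact abs_ip_le hψmeas hτm (hmemψ m) (fr.F_memL2 τ hτ m)
      have hlim : Tendsto (fun m => Real.sqrt (ip (fr.ν m) ψ ψ) * Real.sqrt (ip (fr.ν m) τ τ))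
          atTop (𝓝 0) := by
        have h1 : Tendsto (fun m => Real.sqrt (ip (fr.ν m) ψ ψ)) atTop (𝓝 0) := by
          have h2 := (Real.continuous_sqrt.tendsto (ip (fr.ν 0) ψ ψ)).comp htend
          rw [hψψ0] at h2
          simpa [Function.comp_def] using h2
        have h3 := (Real.continuous_sqrt.tendsto _).comp (fr.F_tendsto τ hτ)
        simpa using h1.mul h3
      exact squeeze_zero_norm hb hlim
    have hψC : ψ ∈ fr.C := ⟨hψD, hc1, hc2⟩
    have hwψ := hw ψ hψC
    have hφψ0 : ip (fr.ν 0) φ ψ = 0 := by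
      rw [ip_congr (EventuallyEq.rfl) (hae0 0 h0notin)]
      simp [ip]
    rw [hφψ0] at hwψ
    have hsub := hwψ.comp hmono.tendsto_atTop
    have hlower : ∀ k, (1 : ℝ) ≤ ip (fr.ν (n k)) (φs (n k)) ψ := by
      intro k
      have hs0 : Real.sqrt (u (n k)) ≠ 0 := (Real.sqrt_pos.2 (hupos k)).ne'
      have hsq : Real.sqrt (u (n k)) ^ 2 = u (n k) := Real.sq_sqrt (hupos k).le
      have h1 : ip (fr.ν (n k)) (φs (n k)) ψ = c k * u (n k) := by
        rw [ip_congr (EventuallyEq.rfl) (haek k)]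
        unfold ip
        simp_rw [show ∀ x, φs (n k) x * (c k * φs (n k) x)
            = c k * (φs (n k) x * φs (n k) x) from fun x => by ring]
        rw [integral_const_mul]
        rfl
      have hinv : (Real.sqrt (u (n k)))⁻¹ * u (n k) = Real.sqrt (u (n k)) := by
        calc (Real.sqrt (u (n k)))⁻¹ * u (n k)
            = (Real.sqrt (u (n k)))⁻¹ * (Real.sqrt (u (n k)) * Real.sqrt (u (n k))) := by
              rw [Real.mul_self_sqrt (hupos k).le]
          _ = Real.sqrt (u (n k)) := by rw [← mul_assoc, inv_mul_cancel₀ hs0, one_mul]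
      have h2 : c k * u (n k) = ((k : ℝ) + 1)⁻¹ * Real.sqrt (u (n k)) := by
        simp only [hc]; rw [mul_assoc, hinv]
      have h3 : ((k : ℝ) + 1) ^ 2 ≤ Real.sqrt (u (n k)) := by
        calc ((k : ℝ) + 1) ^ 2 = Real.sqrt ((((k : ℝ) + 1) ^ 2) ^ 2) :=
              (Real.sqrt_sq (by positivity)).symm
          _ ≤ Real.sqrt (u (n k)) := Real.sqrt_le_sqrt (by nlinarith [(hn k).2])
      rw [h1, h2]
      have hk1 : (0 : ℝ) < (k : ℝ) + 1 := by positivity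
      calc (1 : ℝ) ≤ ((k : ℝ) + 1)⁻¹ * ((k : ℝ) + 1) ^ 2 := by
            rw [pow_two, ← mul_assoc, inv_mul_cancel₀ hk1.ne', one_mul]
            linarith [Nat.cast_nonneg (α := ℝ) k]
        _ ≤ ((k : ℝ) + 1)⁻¹ * Real.sqrt (u (n k)) :=
            mul_le_mul_of_nonneg_left h3 (by positivity)
    obtain ⟨K, hK⟩ := Metric.tendsto_atTop.1 hsub 1 one_pos
    have hKK := hK K le_rfl
    simp only [Function.comp_apply, Real.dist_eq, sub_zero] at hKK
    have habs : (1 : ℝ) ≤ |ip (fr.ν (n K)) (φs (n K)) ψ| :=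
      le_trans (hlower K) (le_abs_self _)
    linarith
  -- Step B: the approximation argument
  by_contra hlt
  push_neg at hlt
  set L := liminf u atTop with hL
  set ε := ip (fr.ν 0) φ φ - L with hεdef
  have hε : 0 < ε := sub_pos.2 hlt
  obtain ⟨ψF, hψF, happ⟩ := fr.F_dense φ hφm hφ2 ε hε
  have hψFm := fr.F_measurable ψF hψF
  have hψFC := fr.F_subset_C hψF
  have hexp := ip_sub_expand hφm hψFm hφ2 (fr.F_memL2 ψF hψF 0)
  rw [hexp] at happ
  have hb : ip (fr.ν 0) φ φ - ε < 2 * ip (fr.ν 0) φ ψF - ip (fr.ν 0) ψF ψF := by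
    linarith
  have hlow : ∀ m, 2 * ip (fr.ν m) (φs m) ψF - ip (fr.ν m) ψF ψF ≤ u m := by
    intro m
    have h0 := ip_nonneg (fr.ν m) (fun x => φs m x - ψF x)
    rw [ip_sub_expand (hmeasφ m) hψFm (hmemφ m) (fr.F_memL2 ψF hψF m)] at h0
    have hum : u m = ip (fr.ν m) (φs m) (φs m) := rfl
    linarith
  have hconv : Tendsto (fun m => 2 * ip (fr.ν m) (φs m) ψF - ip (fr.ν m) ψF ψF) atTop
      (𝓝 (2 * ip (fr.ν 0) φ ψF - ip (fr.ν 0) ψF ψF)) :=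
    ((hw ψF hψFC).const_mul 2).sub (fr.F_tendsto ψF hψF)
  have hliminf : 2 * ip (fr.ν 0) φ ψF - ip (fr.ν 0) ψF ψF ≤ L := by
    have h := liminf_le_liminf (Eventually.of_forall hlow) hconv.isBoundedUnder_ge hcb
    rwa [hconv.liminf_eq] at h
  have hLe : ip (fr.ν 0) φ φ - ε = L := by rw [hεdef]; ring
  linarith

end Mosco
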